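/- Let $u:(0,\infty)\to X$ be a continuous curve in a metric space and let $\mathsf v:[0,1]\to X$ be a constant-speed geodesic with $\mathsf v_0=u_t$ for some $t>0$. Then the map $s\mapsto s^{-1}\,\frac{d^+}{dt}\,d(u_t,\mathsf v_s)^2$ is nonincreasing on $(0,1]$, where $\frac{d^+}{dt}$ denotes the upper right Dini derivative in $t$. -/
import Mathlib

open Filter Set

lemma limsup_coe_const_mul {α : Type*} {f : Filter α} {g : α → EReal} {c : ℝ} (hc : 0 < c) :
    Filter.limsup (fun x => ((c : ℝ) : EReal) * g x) f = ((c : ℝ) : EReal) * Filter.limsup g f := by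
  have key : ∀ (d : ℝ), 0 < d → ∀ x : EReal,
      ((d⁻¹ : ℝ) : EReal) * (((d : ℝ) : EReal) * x) = x := by
    intro d hd x
    rw [← mul_assoc, ← EReal.coe_mul, inv_mul_cancel₀ hd.ne', EReal.coe_one, one_mul]
  have cnn : (0:EReal) ≤ ((c : ℝ) : EReal) := by exact_mod_cast hc.le
  have cinn : (0:EReal) ≤ ((c⁻¹ : ℝ) : EReal) := by exact_mod_cast (inv_nonneg.2 hc.le)
  let e : EReal ≃o EReal :=
    { toFun := fun x => ((c : ℝ) : EReal) * x
      invFun := fun x => ((c⁻¹ : ℝ) : EReal) * x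
      left_inv := key c hc
      right_inv := by
        intro x
        have h2 := key c⁻¹ (by positivity) x
        rw [inv_inv] at h2
        simpa [mul_comm] using congrArg (fun y => y) h2
      map_rel_iff' := by
        intro a b
        simp only [Equiv.coe_fn_mk]
        constructor
        · intro h
          have h2 := mul_le_mul_of_nonneg_left (a := ((c⁻¹:ℝ):EReal)) h cinn
          rwa [key c hc, key c hc] at h2
        · intro h
          exact mul_le_mul_of_nonneg_left h cnn }
  exact (e.limsup_apply).symm

/-- Upper right Dini derivative, with values in `EReal`. -/
noncomputable def upperDiniDeriv (f : ℝ → ℝ) (t : ℝ) : EReal :=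
  Filter.limsup (fun h => (((f (t + h) - f t) / h : ℝ) : EReal)) (nhdsWithin 0 (Set.Ioi 0))

theorem stmt15 {X : Type*} [MetricSpace X] (u : ℝ → X)
    (hu : ContinuousOn u (Set.Ioi 0)) (t : ℝ) (ht : 0 < t) (v : ℝ → X)
    (hgeo : ∀ s₁ ∈ Set.Icc (0:ℝ) 1, ∀ s₂ ∈ Set.Icc (0:ℝ) 1,
      dist (v s₁) (v s₂) = |s₁ - s₂| * dist (v 0) (v 1))
    (hv0 : v 0 = u t) :
    ∀ s₁ ∈ Set.Ioc (0:ℝ) 1, ∀ s₂ ∈ Set.Ioc (0:ℝ) 1, s₁ ≤ s₂ →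
      ((s₂⁻¹ : ℝ) : EReal) * upperDiniDeriv (fun τ => dist (u τ) (v s₂) ^ 2) t ≤
        ((s₁⁻¹ : ℝ) : EReal) * upperDiniDeriv (fun τ => dist (u τ) (v s₁) ^ 2) t := by
  intro s₁ hs₁ s₂ hs₂ h12
  set D := dist (v 0) (v 1) with hDdef
  have hDnn : 0 ≤ D := dist_nonneg
  have h01 : (0:ℝ) ∈ Set.Icc (0:ℝ) 1 := by norm_num
  have hs₁' : s₁ ∈ Set.Icc (0:ℝ) 1 := ⟨hs₁.1.le, hs₁.2⟩
  have hs₂' : s₂ ∈ Set.Icc (0:ℝ) 1 := ⟨hs₂.1.le, hs₂.2⟩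
  have h1 : 0 < s₁ := hs₁.1
  have h2 : 0 < s₂ := lt_of_lt_of_le h1 h12
  have hdt : ∀ s ∈ Set.Icc (0:ℝ) 1, dist (u t) (v s) = s * D := by
    intro s hs
    rw [← hv0, dist_comm, hgeo s hs 0 h01]
    simp [abs_of_nonneg hs.1]
  have hdist12 : dist (v s₁) (v s₂) = (s₂ - s₁) * D := by
    rw [hgeo s₁ hs₁' s₂ hs₂', abs_of_nonpos (by linarith)]; ring
  rw [upperDiniDeriv, upperDiniDeriv, ← limsup_coe_const_mul (inv_pos.2 h2),
    ← limsup_coe_const_mul (inv_pos.2 h1)]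
  refine Filter.limsup_le_limsup ?_
  filter_upwards [self_mem_nhdsWithin] with h hh
  rw [← EReal.coe_mul, ← EReal.coe_mul, EReal.coe_le_coe_iff]
  set a := dist (u (t+h)) (v s₁) with ha_def
  set b := dist (u (t+h)) (v s₂) with hb_def
  have hb : b ≤ a + (s₂ - s₁) * D := by
    have h3 := dist_triangle (u (t+h)) (v s₁) (v s₂)
    rw [hdist12] at h3
    exact h3
  have ha : 0 ≤ a := dist_nonneg
  have hbnn : 0 ≤ b := dist_nonneg
  rw [hdt s₁ hs₁', hdt s₂ hs₂']
  have hh' : (0:ℝ) < h := hh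
  have key : s₂⁻¹ * (b^2 - (s₂*D)^2) ≤ s₁⁻¹ * (a^2 - (s₁*D)^2) := by
    rw [inv_mul_eq_div, inv_mul_eq_div, div_le_div_iff₀ h2 h1]
    have hb2 : b^2 ≤ (a + (s₂-s₁)*D)^2 := by nlinarith
    nlinarith [mul_nonneg (sub_nonneg.2 h12) (sq_nonneg (a - s₁*D)),
      mul_le_mul_of_nonneg_left hb2 h1.le]
  calc s₂⁻¹ * ((b^2 - (s₂*D)^2)/h) = (s₂⁻¹ * (b^2 - (s₂*D)^2))/h := by ring
  _ ≤ (s₁⁻¹*(a^2-(s₁*D)^2))/h := by gcongr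
  _ = s₁⁻¹ * ((a^2-(s₁*D)^2)/h) := by ring
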